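/- Let 𝒜 = (Q, A, δ, q⁰, F) be a DFA with finitely many states over a nonempty finite alphabet A. If there exists an accepting state q ∈ F with Reachable(q⁰, q) such that for every q' ∈ Q, Reachable(q, q') implies Reachable(q', q), then there exists ε > 0 such that μ_n(L(𝒜)) ≥ ε for infinitely many n (indeed ε = 1/(|A|^{2|Q|} · |Q|) works); in particular the sequence μ_n(L(𝒜)) does not converge to 0. -/

import Mathlib

open Filter

/-- `mu L n` is the probability that a uniformly random string of length `n` lies in `L`. -/
noncomputable def mu {A : Type*} [Fintype A] (L : Set (List A)) (n : ℕ) : ℝ :=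
  (Nat.card {s : List A // s.length = n ∧ s ∈ L} : ℝ) / (Fintype.card A : ℝ) ^ n

/-- Symmetric difference of two languages. -/
def sdiffL {A : Type*} (L₁ L₂ : Set (List A)) : Set (List A) := (L₁ \ L₂) ∪ (L₂ \ L₁)

/-- `L₁ ≃_p L₂` : the probability of the symmetric difference tends to `0`. -/
def pEquiv {A : Type*} [Fintype A] (L₁ L₂ : Set (List A)) : Prop :=
  Filter.Tendsto (mu (sdiffL L₁ L₂)) Filter.atTop (nhds 0)

/-- `Reachable M q q'` : there is a string driving `M` from state `q` to state `q'`. -/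
def Reachable {A σ : Type*} (M : DFA A σ) (q q' : σ) : Prop :=
  ∃ s : List A, M.evalFrom q s = q'

/-- The language accepted by the DFA `M`. -/
def langOf {A σ : Type*} (M : DFA A σ) : Set (List A) := {s : List A | M.eval s ∈ M.accept}

private lemma shortReachAux {A σ : Type*} [Fintype σ] (M : DFA A σ) (q q' : σ) :
    ∀ n (s : List A), s.length ≤ n → M.evalFrom q s = q' →
      ∃ t : List A, t.length < Fintype.card σ ∧ M.evalFrom q t = q' := by
  have hcpos : 0 < Fintype.card σ := @Fintype.card_pos _ _ ⟨q⟩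
  intro n
  induction n with
  | zero =>
    intro s hs he
    exact ⟨s, by omega, he⟩
  | succ n ih =>
    intro s hs he
    by_cases hlt : s.length < Fintype.card σ
    · exact ⟨s, hlt, he⟩
    · obtain ⟨p, x, y, z, hsplit, _, hyne, hx, hy, hz⟩ :=
        M.evalFrom_split (le_of_not_gt hlt) he
      have heval : M.evalFrom q (x ++ z) = q' := by
        rw [DFA.evalFrom_of_append, hx, hz]
      have hylen : 0 < y.length := List.length_pos_iff.mpr hyne
      have hslen : s.length = x.length + y.length + z.length := by
        subst hsplit; simp only [List.length_append]
      refine ih (x ++ z) ?_ heval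
      simp only [List.length_append]
      omega

private lemma shortReach {A σ : Type*} [Fintype σ] (M : DFA A σ) {q q' : σ}
    (h : Reachable M q q') :
    ∃ t : List A, t.length < Fintype.card σ ∧ M.evalFrom q t = q' := by
  obtain ⟨s, hs⟩ := h
  exact shortReachAux M q q' s.length s le_rfl hs

theorem mu_frequently_ge_of_sink {A σ : Type*} [Fintype A] [Nonempty A] [Fintype σ]
    (M : DFA A σ)
    (h : ∃ q ∈ M.accept, Reachable M M.start q ∧
      ∀ q' : σ, Reachable M q q' → Reachable M q' q) :
    (∃ ε : ℝ, 0 < ε ∧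
        ε = 1 / ((Fintype.card A : ℝ) ^ (2 * Fintype.card σ) * (Fintype.card σ : ℝ)) ∧
        (∃ᶠ n in Filter.atTop, ε ≤ mu (langOf M) n)) ∧
      ¬ Filter.Tendsto (mu (langOf M)) Filter.atTop (nhds 0) := by
  classical
  obtain ⟨q, hqacc, hreach, hback⟩ := h
  have hσ : Nonempty σ := ⟨q⟩
  set c := Fintype.card σ with hc
  have hcpos : 0 < c := Fintype.card_pos
  set a := (Fintype.card A : ℝ) with ha
  have hA : 0 < Fintype.card A := Fintype.card_pos
  have ha1 : (1 : ℝ) ≤ a := by rw [ha]; exact_mod_cast hA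
  have hapos : (0 : ℝ) < a := lt_of_lt_of_le one_pos ha1
  obtain ⟨s₀, hs₀len, hs₀⟩ := shortReach M hreach
  have hret : ∀ q' : σ, ∃ t : List A,
      t.length < c ∧ (Reachable M q q' → M.evalFrom q' t = q) := by
    intro q'
    by_cases h' : Reachable M q q'
    · obtain ⟨t, ht1, ht2⟩ := shortReach M (hback q' h')
      exact ⟨t, ht1, fun _ => ht2⟩
    · exact ⟨[], by simpa using hcpos, fun h'' => absurd h'' h'⟩
  choose r hrlen hrspec using hret
  set ε : ℝ := 1 / (a ^ (2 * c) * (c : ℝ)) with hε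
  have hεpos : 0 < ε := by
    have : (0 : ℝ) < (c : ℝ) := by exact_mod_cast hcpos
    positivity
  have key : ∀ m : ℕ, ∃ n, m ≤ n ∧ ε ≤ mu (langOf M) n := by
    intro m
    set g : List.Vector A m → ℕ := fun t => (r (M.evalFrom q t.toList)).length with hg
    have hgrange : ∀ t ∈ (Finset.univ : Finset (List.Vector A m)),
        g t ∈ Finset.range c := fun t _ => Finset.mem_range.mpr (hrlen _)
    obtain ⟨d, hd, hfiber⟩ : ∃ d ∈ Finset.range c,
        a ^ m / (c : ℝ) ≤ ((Finset.univ.filter fun t => g t = d).card : ℝ) := by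
      by_contra hcon
      push_neg at hcon
      have hsum : ∑ d ∈ Finset.range c,
          ((Finset.univ.filter fun t => g t = d).card : ℝ)
          = (Fintype.card A : ℝ) ^ m := by
        rw [← Nat.cast_sum, ← Finset.card_eq_sum_card_fiberwise hgrange]
        simp [card_vector]
      have hlt : ∑ d ∈ Finset.range c,
          ((Finset.univ.filter fun t => g t = d).card : ℝ)
          < ∑ _d ∈ Finset.range c, a ^ m / (c : ℝ) := by
        apply Finset.sum_lt_sum_of_nonempty ⟨0, Finset.mem_range.mpr hcpos⟩
        intro i hi
        exact hcon i hi
      rw [hsum, Finset.sum_const, Finset.card_range, nsmul_eq_mul] at hlt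
      have hcne : ((c : ℝ)) ≠ 0 := by positivity
      rw [mul_div_cancel₀ _ hcne] at hlt
      exact lt_irrefl _ (ha ▸ hlt)
    rw [Finset.mem_range] at hd
    set n := s₀.length + m + d with hn
    -- the target set is finite
    have hSfin : Finite {s : List A // s.length = n ∧ s ∈ langOf M} := by
      have hsub : {s : List A | s.length = n ∧ s ∈ langOf M} ⊆ {s | s.length = n} :=
        fun s hs => hs.1
      exact ((List.finite_length_eq A n).subset hsub).to_subtype
    -- injection from the fiber
    set fib := (Finset.univ.filter fun t : List.Vector A m => g t = d) with hfib
    have hF : ∀ t : List.Vector A m, t ∈ fib →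
        (s₀ ++ t.toList ++ r (M.evalFrom q t.toList)).length = n ∧
        (s₀ ++ t.toList ++ r (M.evalFrom q t.toList)) ∈ langOf M := by
      intro t ht
      have htd : g t = d := (Finset.mem_filter.mp ht).2
      constructor
      · simp only [List.length_append, List.Vector.toList_length]
        have htd' : (r (M.evalFrom q t.toList)).length = d := htd
        omega
      · have hreach' : Reachable M q (M.evalFrom q t.toList) := ⟨t.toList, rfl⟩
        have : M.eval (s₀ ++ t.toList ++ r (M.evalFrom q t.toList)) = q := by
          rw [DFA.eval, DFA.evalFrom_of_append, DFA.evalFrom_of_append, hs₀,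
            hrspec _ hreach']
        show M.eval _ ∈ M.accept
        rw [this]; exact hqacc
    let F : {t // t ∈ fib} → {s : List A // s.length = n ∧ s ∈ langOf M} :=
      fun t => ⟨s₀ ++ t.1.toList ++ r (M.evalFrom q t.1.toList), hF t.1 t.2⟩
    have hFinj : Function.Injective F := by
      intro t₁ t₂ hEq
      have hval : s₀ ++ t₁.1.toList ++ r (M.evalFrom q t₁.1.toList)
          = s₀ ++ t₂.1.toList ++ r (M.evalFrom q t₂.1.toList) :=
        congrArg Subtype.val hEq
      have hkey : ∀ t : List.Vector A m,
          ((s₀ ++ t.toList ++ r (M.evalFrom q t.toList)).drop s₀.length).take m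
            = t.toList := by
        intro t
        rw [List.append_assoc, List.drop_left, List.take_left' t.toList_length]
      have : t₁.1.toList = t₂.1.toList := by
        rw [← hkey t₁.1, ← hkey t₂.1, hval]
      exact Subtype.ext (List.Vector.toList_injective this)
    have hcard : (fib.card : ℝ) ≤ (Nat.card {s : List A // s.length = n ∧ s ∈ langOf M} : ℝ) := by
      have := Nat.card_le_card_of_injective F hFinj
      rw [Nat.card_eq_finsetCard] at this
      exact_mod_cast this
    refine ⟨n, by omega, ?_⟩
    have hmu : (a ^ m / (c : ℝ)) / a ^ n ≤ mu (langOf M) n := by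
      unfold mu
      rw [← ha]
      gcongr
      exact le_trans hfiber hcard
    refine le_trans ?_ hmu
    have e1 : (a ^ m / (c : ℝ)) / a ^ n = 1 / (a ^ (s₀.length + d) * (c : ℝ)) := by
      rw [show n = (s₀.length + d) + m from by omega, pow_add]
      have h1 : a ^ m ≠ 0 := by positivity
      have h2 : (c : ℝ) ≠ 0 := by positivity
      have h3 : a ^ (s₀.length + d) ≠ 0 := by positivity
      field_simp
    rw [e1, hε]
    apply one_div_le_one_div_of_le
    · positivity
    · have hexp : a ^ (s₀.length + d) ≤ a ^ (2 * c) :=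
        pow_le_pow_right₀ ha1 (by omega)
      exact mul_le_mul_of_nonneg_right hexp (by positivity)
  have hfreq : ∃ᶠ n in Filter.atTop, ε ≤ mu (langOf M) n := by
    rw [Filter.frequently_atTop]
    intro N
    obtain ⟨n, hn, hle⟩ := key N
    exact ⟨n, hn, hle⟩
  refine ⟨⟨ε, hεpos, rfl, hfreq⟩, ?_⟩
  intro hT
  have hev : ∀ᶠ n in Filter.atTop, mu (langOf M) n < ε :=
    hT (Iio_mem_nhds hεpos)
  obtain ⟨n, hn1, hn2⟩ := (hfreq.and_eventually hev).exists
  linarith
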